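/- If ℓ : {0,1} × [0,1] → ℝ is a proper loss bounded by B, then the prediction sequence has external regret relative to any fixed action bounded by 2B times the ℓ1 calibration error: for every q ∈ {0, 1/N, …, 1}, Σ_{t=1}^T (ℓ(o_t, p_t) − ℓ(o_t, q)) ≤ 2B · Σ_{i=0}^N |Σ_{t : p_t = i/N} (o_t − i/N)|. -/

import Mathlib

open Finset
open scoped Classical

/-- A loss `ℓ(y, q)` on binary outcomes `y ∈ {0,1}` and predictions `q ∈ [0,1]` is proper if
`p·ℓ(1,p) + (1−p)·ℓ(0,p) ≤ p·ℓ(1,q) + (1−p)·ℓ(0,q)` for all `p, q ∈ [0,1]`. -/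
def IsProperLoss (ℓ : ℝ → ℝ → ℝ) : Prop :=
  ∀ p ∈ Set.Icc (0 : ℝ) 1, ∀ q ∈ Set.Icc (0 : ℝ) 1,
    p * ℓ 1 p + (1 - p) * ℓ 0 p ≤ p * ℓ 1 q + (1 - p) * ℓ 0 q

/-- A loss is bounded by `B` if `0 ≤ ℓ(y,q) ≤ B` for all `y ∈ {0,1}` and `q ∈ [0,1]`. -/
def IsBoundedLoss (ℓ : ℝ → ℝ → ℝ) (B : ℝ) : Prop :=
  ∀ y ∈ ({0, 1} : Set ℝ), ∀ q ∈ Set.Icc (0 : ℝ) 1, 0 ≤ ℓ y q ∧ ℓ y q ≤ B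

/-- Per-bucket regret bound for a bounded proper loss. -/
lemma bucket_regret {ι : Type*} (ℓ : ℝ → ℝ → ℝ) (B : ℝ)
    (hproper : IsProperLoss ℓ) (hbounded : IsBoundedLoss ℓ B)
    (s : Finset ι) (o : ι → ℝ) (ho : ∀ t ∈ s, o t = 0 ∨ o t = 1)
    (pi q : ℝ) (hpi : pi ∈ Set.Icc (0:ℝ) 1) (hq : q ∈ Set.Icc (0:ℝ) 1) :
    ∑ t ∈ s, (ℓ (o t) pi - ℓ (o t) q) ≤ 2 * B * |∑ t ∈ s, (o t - pi)| := by
  set a := ℓ 1 pi - ℓ 1 q with ha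
  set b := ℓ 0 pi - ℓ 0 q with hb
  have h0 : (0:ℝ) ∈ ({0,1} : Set ℝ) := by simp
  have h1 : (1:ℝ) ∈ ({0,1} : Set ℝ) := by simp
  obtain ⟨h1p0, h1p1⟩ := hbounded 1 h1 pi hpi
  obtain ⟨h1q0, h1q1⟩ := hbounded 1 h1 q hq
  obtain ⟨h0p0, h0p1⟩ := hbounded 0 h0 pi hpi
  obtain ⟨h0q0, h0q1⟩ := hbounded 0 h0 q hq
  have hab : |a - b| ≤ 2 * B := by
    rw [abs_le]
    constructor <;> rw [ha, hb] <;> linarith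
  have hrw : ∑ t ∈ s, (ℓ (o t) pi - ℓ (o t) q)
      = (s.card : ℝ) * (pi * a + (1 - pi) * b) + (∑ t ∈ s, (o t - pi)) * (a - b) := by
    have hpt : ∀ t ∈ s, ℓ (o t) pi - ℓ (o t) q
        = pi * a + (1 - pi) * b + (o t - pi) * (a - b) := by
      intro t ht
      rcases ho t ht with h | h <;> rw [h, ha, hb] <;> ring
    rw [Finset.sum_congr rfl hpt, Finset.sum_add_distrib, Finset.sum_const, nsmul_eq_mul,
      ← Finset.sum_mul]
  rw [hrw]
  have hprop := hproper pi hpi q hq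
  have hval : pi * a + (1 - pi) * b
      = (pi * ℓ 1 pi + (1 - pi) * ℓ 0 pi) - (pi * ℓ 1 q + (1 - pi) * ℓ 0 q) := by
    rw [ha, hb]; ring
  have h2 : (s.card : ℝ) * (pi * a + (1 - pi) * b) ≤ 0 :=
    mul_nonpos_of_nonneg_of_nonpos (Nat.cast_nonneg _) (by rw [hval]; linarith)
  have h3 : (∑ t ∈ s, (o t - pi)) * (a - b) ≤ |∑ t ∈ s, (o t - pi)| * (2 * B) := by
    calc (∑ t ∈ s, (o t - pi)) * (a - b) ≤ |(∑ t ∈ s, (o t - pi)) * (a - b)| := le_abs_self _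
    _ = |∑ t ∈ s, (o t - pi)| * |a - b| := abs_mul _ _
    _ ≤ |∑ t ∈ s, (o t - pi)| * (2 * B) :=
        mul_le_mul_of_nonneg_left hab (abs_nonneg _)
  nlinarith [h2, h3]

/-- consequence of the paper's Lemma 2: for a bounded proper loss, the
external regret relative to any fixed action `q = k/N` is bounded by `2B` times the
ℓ1 calibration error. -/
theorem external_regret_le_calibration
    (T N : ℕ) (hT : 1 ≤ T) (hN : 1 ≤ N)
    (p o : Fin T → ℝ)
    (hp : ∀ t, ∃ i : Fin (N + 1), p t = (i : ℝ) / N)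
    (ho : ∀ t, o t = 0 ∨ o t = 1)
    (ℓ : ℝ → ℝ → ℝ) (B : ℝ) (hB : 0 < B)
    (hproper : IsProperLoss ℓ) (hbounded : IsBoundedLoss ℓ B) :
    ∀ k ∈ Finset.range (N + 1),
      ∑ t, (ℓ (o t) (p t) - ℓ (o t) ((k : ℝ) / N))
        ≤ 2 * B * ∑ i ∈ Finset.range (N + 1),
            |∑ t ∈ univ.filter (fun t => p t = (i : ℝ) / N), (o t - (i : ℝ) / N)| := by
  intro k hk
  have hN0 : (0:ℝ) < N := by exact_mod_cast Nat.lt_of_lt_of_le Nat.zero_lt_one hN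
  have hmemIcc : ∀ i : ℕ, i ≤ N → ((i:ℝ)/N) ∈ Set.Icc (0:ℝ) 1 := by
    intro i hi
    constructor
    · positivity
    · rw [div_le_one hN0]
      exact_mod_cast hi
  have hq : ((k:ℝ)/N) ∈ Set.Icc (0:ℝ) 1 :=
    hmemIcc k (Nat.lt_succ_iff.mp (Finset.mem_range.mp hk))
  -- fiber decomposition
  have hinj : ∀ i ∈ Finset.range (N+1), ∀ j ∈ Finset.range (N+1),
      (fun i : ℕ => (i:ℝ)/N) i = (fun i : ℕ => (i:ℝ)/N) j → i = j := by
    intro i _ j _ h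
    field_simp at h
    exact_mod_cast h
  have hmaps : ∀ t : Fin T, t ∈ (Finset.univ : Finset (Fin T)) →
      p t ∈ (Finset.range (N+1)).image (fun i : ℕ => (i:ℝ)/N) := by
    intro t _
    obtain ⟨i, hi⟩ := hp t
    exact Finset.mem_image.mpr ⟨i.val, Finset.mem_range.mpr i.isLt, hi.symm⟩
  have hdecomp : ∀ f : Fin T → ℝ, ∑ t, f t
      = ∑ i ∈ Finset.range (N+1), ∑ t ∈ univ.filter (fun t => p t = (i:ℝ)/N), f t := by
    intro f
    rw [← Finset.sum_fiberwise_of_maps_to hmaps f, Finset.sum_image hinj]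
  rw [hdecomp (fun t => ℓ (o t) (p t) - ℓ (o t) ((k:ℝ)/N)), Finset.mul_sum]
  apply Finset.sum_le_sum
  intro i hi
  have hi' : i ≤ N := Nat.lt_succ_iff.mp (Finset.mem_range.mp hi)
  have hcongr : ∑ t ∈ univ.filter (fun t => p t = (i:ℝ)/N),
      (ℓ (o t) (p t) - ℓ (o t) ((k:ℝ)/N))
      = ∑ t ∈ univ.filter (fun t => p t = (i:ℝ)/N),
      (ℓ (o t) ((i:ℝ)/N) - ℓ (o t) ((k:ℝ)/N)) := by
    apply Finset.sum_congr rfl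
    intro t ht
    rw [(Finset.mem_filter.mp ht).2]
  rw [hcongr]
  exact bucket_regret ℓ B hproper hbounded _ o (fun t _ => ho t) _ _ (hmemIcc i hi') hq
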